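/- The number of Schröder m-paths with exactly j flat steps equals the number of Schröder m-paths with exactly j peaks, where a peak is an up step immediately followed by a down step. -/
import Mathlib


/-- Steps of a Schröder path: up `(1,1)`, down `(1,-1)`, flat `(2,0)`. -/
inductive SchStep | U | D | F
deriving DecidableEq, BEq

/-- Horizontal displacement of a step. -/
def SchStep.x : SchStep → ℕ
  | .U => 1
  | .D => 1
  | .F => 2

/-- Vertical displacement of a step. -/
def SchStep.h : SchStep → ℤ
  | .U => 1
  | .D => -1
  | .F => 0

/-- `p` is a Schröder `m`-path: it goes from `(0,0)` to `(2m,0)` using steps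
`(1,1)`, `(1,-1)`, `(2,0)` and never goes below the `x`-axis. -/
def IsSchroderPath (m : ℕ) (p : List SchStep) : Prop :=
  (p.map SchStep.x).sum = 2 * m ∧ (p.map SchStep.h).sum = 0 ∧
    ∀ q : List SchStep, q <+: p → 0 ≤ (q.map SchStep.h).sum

/-- The number of peaks of a path: positions where an up step is immediately
followed by a down step. -/
def numPeaks (p : List SchStep) : ℕ :=
  (List.range p.length).countP
    (fun i => decide (p.getD i SchStep.F = SchStep.U ∧ p.getD (i + 1) SchStep.F = SchStep.D))

/-- The involution swapping flats and peaks. -/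
def phi : List SchStep → List SchStep
  | [] => []
  | .F :: rest => .U :: .D :: phi rest
  | .U :: .D :: rest => .F :: phi rest
  | .U :: rest => .U :: phi rest
  | .D :: rest => .D :: phi rest

lemma phi_nil : phi [] = [] := rfl
lemma phi_F (rest) : phi (.F :: rest) = .U :: .D :: phi rest := rfl
lemma phi_UD (rest) : phi (.U :: .D :: rest) = .F :: phi rest := rfl
lemma phi_D (rest) : phi (.D :: rest) = .D :: phi rest := by
  cases rest with
  | nil => rfl
  | cons a t => cases a <;> rfl
lemma phi_U (rest) (h : ∀ r, rest ≠ SchStep.D :: r) : phi (.U :: rest) = .U :: phi rest := by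
  match rest with
  | [] => rfl
  | .U :: t => rfl
  | .F :: t => rfl
  | .D :: t => exact absurd rfl (h t)

lemma phi_ne_D (l : List SchStep) (h : ∀ r, l ≠ SchStep.D :: r) (r : List SchStep) :
    phi l ≠ SchStep.D :: r := by
  match l with
  | [] => simp [phi_nil]
  | .F :: t => simp [phi_F]
  | .D :: t => exact absurd rfl (h t)
  | .U :: .D :: t => simp [phi_UD]
  | .U :: [] => simp [show phi [SchStep.U] = [SchStep.U] from rfl]
  | .U :: .U :: t => rw [phi_U _ (by simp)]; simp
  | .U :: .F :: t => rw [phi_U _ (by simp)]; simp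

lemma phi_phi (p : List SchStep) : phi (phi p) = p := by
  induction p using phi.induct with
  | case1 => rfl
  | case2 rest ih => rw [phi_F, phi_UD, ih]
  | case3 rest ih => rw [phi_UD, phi_F, ih]
  | case4 rest h ih =>
    have h' : ∀ r, rest ≠ SchStep.D :: r := fun r hr => h r hr
    rw [phi_U _ h', phi_U _ (phi_ne_D rest h'), ih]
  | case5 rest ih => rw [phi_D, phi_D, ih]

lemma phi_sum_x (p : List SchStep) :
    ((phi p).map SchStep.x).sum = (p.map SchStep.x).sum := by
  induction p using phi.induct with
  | case1 => rfl
  | case2 rest ih => rw [phi_F]; simp [SchStep.x, ih]; omega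
  | case3 rest ih => rw [phi_UD]; simp [SchStep.x, ih]; omega
  | case4 rest h ih =>
    rw [phi_U _ (fun r hr => h r hr)]; simp [SchStep.x, ih]
  | case5 rest ih => rw [phi_D]; simp [SchStep.x, ih]

lemma phi_sum_h (p : List SchStep) :
    ((phi p).map SchStep.h).sum = (p.map SchStep.h).sum := by
  induction p using phi.induct with
  | case1 => rfl
  | case2 rest ih => rw [phi_F]; simp [SchStep.h, ih]
  | case3 rest ih => rw [phi_UD]; simp [SchStep.h, ih]
  | case4 rest h ih =>
    rw [phi_U _ (fun r hr => h r hr)]; simp [SchStep.h, ih]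
  | case5 rest ih => rw [phi_D]; simp [SchStep.h, ih]

lemma numPeaks_cons (a : SchStep) (l : List SchStep) :
    numPeaks (a :: l) =
      (if a = SchStep.U ∧ l.getD 0 SchStep.F = SchStep.D then 1 else 0) + numPeaks l := by
  unfold numPeaks
  rw [List.length_cons, List.range_succ_eq_map, List.countP_cons, List.countP_map]
  simp only [Function.comp, Nat.succ_eq_add_one, List.getD_cons_succ, List.getD_cons_zero,
    Bool.and_eq_true, decide_eq_true_eq]
  exact Nat.add_comm _ _

lemma numPeaks_nil : numPeaks [] = 0 := rfl

@[simp] lemma beq_DF : (SchStep.D == SchStep.F) = false := rfl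
@[simp] lemma beq_UF : (SchStep.U == SchStep.F) = false := rfl
@[simp] lemma beq_FF : (SchStep.F == SchStep.F) = true := rfl

lemma phi_count (p : List SchStep) : (phi p).count SchStep.F = numPeaks p := by
  induction p using phi.induct with
  | case1 => rfl
  | case2 rest ih =>
    rw [phi_F]; simp [List.count_cons, numPeaks_cons, ih, beq_iff_eq]
  | case3 rest ih =>
    rw [phi_UD]
    simp [List.count_cons, numPeaks_cons, ih, List.getD_cons_zero, beq_iff_eq]
    omega
  | case4 rest h ih =>
    rw [phi_U _ (fun r hr => h r hr)]
    have : rest.getD 0 SchStep.F ≠ SchStep.D := by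
      match rest with
      | [] => simp [List.getD]
      | .U :: t => simp [List.getD_cons_zero]
      | .F :: t => simp [List.getD_cons_zero]
      | .D :: t => exact absurd rfl (h t)
    rw [List.getD_eq_getElem?_getD] at this
    simp [List.count_cons, numPeaks_cons, ih, this, beq_iff_eq]
  | case5 rest ih =>
    rw [phi_D]; simp [List.count_cons, numPeaks_cons, ih, beq_iff_eq]

lemma phi_numPeaks (p : List SchStep) : numPeaks (phi p) = p.count SchStep.F := by
  induction p using phi.induct with
  | case1 => rfl
  | case2 rest ih =>
    rw [phi_F]
    simp [numPeaks_cons, List.count_cons, ih, List.getD_cons_zero, beq_iff_eq]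
    omega
  | case3 rest ih =>
    rw [phi_UD]
    simp [numPeaks_cons, List.count_cons, ih, beq_iff_eq]
  | case4 rest h ih =>
    have h' : ∀ r, rest ≠ SchStep.D :: r := fun r hr => h r hr
    rw [phi_U _ h']
    have hne : (phi rest).getD 0 SchStep.F ≠ SchStep.D := by
      rcases hp : phi rest with _ | ⟨a, t⟩
      · simp [List.getD]
      · have := phi_ne_D rest h' t
        rw [hp] at this
        simp [List.getD_cons_zero]
        intro ha; exact this (by rw [ha])
    rw [List.getD_eq_getElem?_getD] at hne
    simp [numPeaks_cons, List.count_cons, ih, hne, beq_iff_eq]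
  | case5 rest ih =>
    rw [phi_D]
    simp [numPeaks_cons, List.count_cons, ih, beq_iff_eq]

lemma phi_prefix (p : List SchStep) :
    ∀ q, q <+: phi p →
      ∃ r, r <+: p ∧ ((q.map SchStep.h).sum = (r.map SchStep.h).sum ∨
        (q.map SchStep.h).sum = (r.map SchStep.h).sum + 1) := by
  induction p using phi.induct with
  | case1 =>
    intro q hq
    rw [phi_nil, List.prefix_nil] at hq
    exact ⟨[], List.nil_prefix, by simp [hq]⟩
  | case2 rest ih =>
    intro q hq
    rw [phi_F] at hq
    rcases q with _ | ⟨a, q'⟩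
    · exact ⟨[], List.nil_prefix, by simp⟩
    · rw [List.cons_prefix_cons] at hq
      obtain ⟨rfl, hq⟩ := hq
      rcases q' with _ | ⟨b, q''⟩
      · exact ⟨[], List.nil_prefix, by simp [SchStep.h]⟩
      · rw [List.cons_prefix_cons] at hq
        obtain ⟨rfl, hq⟩ := hq
        obtain ⟨r', hr', hs⟩ := ih q'' hq
        refine ⟨SchStep.F :: r', List.cons_prefix_cons.mpr ⟨rfl, hr'⟩, ?_⟩
        simpa [SchStep.h] using hs
  | case3 rest ih =>
    intro q hq
    rw [phi_UD] at hq
    rcases q with _ | ⟨a, q'⟩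
    · exact ⟨[], List.nil_prefix, by simp⟩
    · rw [List.cons_prefix_cons] at hq
      obtain ⟨rfl, hq⟩ := hq
      obtain ⟨r', hr', hs⟩ := ih q' hq
      refine ⟨SchStep.U :: SchStep.D :: r',
        List.cons_prefix_cons.mpr ⟨rfl, List.cons_prefix_cons.mpr ⟨rfl, hr'⟩⟩, ?_⟩
      simp only [List.map_cons, List.sum_cons, SchStep.h]
      omega
  | case4 rest h ih =>
    intro q hq
    rw [phi_U _ (fun r hr => h r hr)] at hq
    rcases q with _ | ⟨a, q'⟩
    · exact ⟨[], List.nil_prefix, by simp⟩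
    · rw [List.cons_prefix_cons] at hq
      obtain ⟨rfl, hq⟩ := hq
      obtain ⟨r', hr', hs⟩ := ih q' hq
      refine ⟨SchStep.U :: r', List.cons_prefix_cons.mpr ⟨rfl, hr'⟩, ?_⟩
      simp only [List.map_cons, List.sum_cons, SchStep.h]
      omega
  | case5 rest ih =>
    intro q hq
    rw [phi_D] at hq
    rcases q with _ | ⟨a, q'⟩
    · exact ⟨[], List.nil_prefix, by simp⟩
    · rw [List.cons_prefix_cons] at hq
      obtain ⟨rfl, hq⟩ := hq
      obtain ⟨r', hr', hs⟩ := ih q' hq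
      refine ⟨SchStep.D :: r', List.cons_prefix_cons.mpr ⟨rfl, hr'⟩, ?_⟩
      simp only [List.map_cons, List.sum_cons, SchStep.h]
      omega

lemma phi_isSchroder {m : ℕ} {p : List SchStep} (hp : IsSchroderPath m p) :
    IsSchroderPath m (phi p) := by
  obtain ⟨hx, hh, hnn⟩ := hp
  refine ⟨by rw [phi_sum_x, hx], by rw [phi_sum_h, hh], ?_⟩
  intro q hq
  obtain ⟨r, hr, hs⟩ := phi_prefix p q hq
  have := hnn r hr
  rcases hs with hs | hs <;> omega

/-- The number of Schröder `m`-paths with exactly `j` flat steps equals the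
number of Schröder `m`-paths with exactly `j` peaks. -/
theorem schroder_flats_eq_peaks (m j : ℕ) :
    Set.ncard {p : List SchStep | IsSchroderPath m p ∧ p.count SchStep.F = j} =
    Set.ncard {p : List SchStep | IsSchroderPath m p ∧ numPeaks p = j} := by
  have hinj : Function.Injective phi := Function.LeftInverse.injective phi_phi
  have himg : {p : List SchStep | IsSchroderPath m p ∧ numPeaks p = j} =
      phi '' {p : List SchStep | IsSchroderPath m p ∧ p.count SchStep.F = j} := by
    ext p
    simp only [Set.mem_image, Set.mem_setOf_eq]
    constructor
    · rintro ⟨hp, hj⟩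
      exact ⟨phi p, ⟨phi_isSchroder hp, by rw [phi_count, hj]⟩, phi_phi p⟩
    · rintro ⟨q, ⟨hq, hjq⟩, rfl⟩
      exact ⟨phi_isSchroder hq, by rw [phi_numPeaks, hjq]⟩
  rw [himg, Set.ncard_image_of_injective _ hinj]
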